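/- In the countable-state recursive construction, u_∞(x) > φ(x) for every x ∈ V \ D_∞; consequently D_∞ = {x ∈ V : u_∞(x) = φ(x)}. -/

import Mathlib

open scoped ENNReal Classical

/-- The off-diagonal action `K[f](x) = Σ_{z≠x} L(x,z) f(z)` of the generator on
`[0,∞]`-valued functions. -/
noncomputable def Kop {V : Type*} (Lmat : V → V → ℝ) (f : V → ℝ≥0∞) (x : V) : ℝ≥0∞ :=
  ∑' z : V, (if z = x then 0 else ENNReal.ofReal (Lmat x z)) * f z

/-- In the countable-state recursive construction, `u_∞(x) > φ(x)` for
every `x ∈ V \ D_∞`; consequently `D_∞ = {x ∈ V : u_∞(x) = φ(x)}`.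

Setup as in the recursion: `D₀ = V`, `u₀ = φ`,
`D_{n+1} = {x ∈ D_n : K[u_n](x) ≤ (r+L(x)) u_n(x)}`, `(u_n)` non-decreasing with
`u_n = φ` on `D_n` and `(r+L(x)) u_n(x) = K[u_n](x)` off `D_n`;
`u_∞ = ⨆_n u_n`, `D_∞ = ⋂_n D_n`. -/
theorem strict_majorant_off_Dinf
    {V : Type*} [Countable V]
    (Lmat : V → V → ℝ) (Ldiag : V → ℝ)
    (hoff : ∀ x z, x ≠ z → 0 ≤ Lmat x z)
    (hLdiag : ∀ x, 0 ≤ Ldiag x)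
    (r : ℝ) (hr : 0 < r)
    (φ : V → ℝ≥0∞)
    (u : ℕ → V → ℝ≥0∞) (D : ℕ → Set V)
    (hD0 : D 0 = Set.univ) (hu0 : u 0 = φ)
    (hmono : ∀ n x, u n x ≤ u (n+1) x)
    (hDrec : ∀ n, D (n+1)
      = {x ∈ D n | Kop Lmat (u n) x ≤ ENNReal.ofReal (r + Ldiag x) * u n x})
    (hfix : ∀ n, ∀ x ∈ D n, u n x = φ x)
    (heq : ∀ n, ∀ x ∉ D n,
      ENNReal.ofReal (r + Ldiag x) * u n x = Kop Lmat (u n) x) :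
    (∀ x ∉ ⋂ n, D n, φ x < ⨆ n, u n x) ∧
    (⋂ n, D n) = {x | (⨆ n, u n x) = φ x} := by
  have key : ∀ x ∉ ⋂ n, D n, φ x < ⨆ n, u n x := by
    intro x hx
    have hex : ∃ n, x ∉ D n := by
      simpa [Set.mem_iInter] using hx
    classical
    have hxn0 : x ∉ D (Nat.find hex) := Nat.find_spec hex
    have hn0 : Nat.find hex ≠ 0 := by
      intro h
      apply hxn0
      rw [h, hD0]; trivial
    obtain ⟨m, hm⟩ : ∃ m, Nat.find hex = m + 1 :=
      ⟨Nat.find hex - 1, (Nat.succ_pred_eq_of_ne_zero hn0).symm⟩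
    have hxn : x ∉ D (m+1) := hm ▸ hxn0
    have hxm : x ∈ D m := by
      by_contra h
      have := Nat.find_min' hex h
      omega
    have hlt : ENNReal.ofReal (r + Ldiag x) * u m x < Kop Lmat (u m) x := by
      have := hxn
      rw [hDrec m] at this
      simp only [Set.mem_setOf_eq, hxm, true_and, not_le] at this
      exact this
    have hKmono : Kop Lmat (u m) x ≤ Kop Lmat (u (m+1)) x := by
      apply ENNReal.tsum_le_tsum
      intro z
      exact mul_le_mul_right (hmono m z) _
    have heq' := heq (m+1) x hxn
    have hlt2 : ENNReal.ofReal (r + Ldiag x) * u m x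
        < ENNReal.ofReal (r + Ldiag x) * u (m+1) x := by
      rw [heq']
      exact hlt.trans_le hKmono
    have hc0 : ENNReal.ofReal (r + Ldiag x) ≠ 0 := by
      simp [ENNReal.ofReal_eq_zero, not_le]
      linarith [hLdiag x]
    have hct : ENNReal.ofReal (r + Ldiag x) ≠ ⊤ := ENNReal.ofReal_ne_top
    have humlt : u m x < u (m+1) x := (ENNReal.mul_lt_mul_iff_right hc0 hct).mp hlt2
    calc φ x = u m x := (hfix m x hxm).symm
      _ < u (m+1) x := humlt
      _ ≤ ⨆ n, u n x := le_iSup (fun n => u n x) (m+1)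
  refine ⟨key, ?_⟩
  ext x
  simp only [Set.mem_iInter, Set.mem_setOf_eq]
  constructor
  · intro h
    apply le_antisymm
    · exact iSup_le fun n => le_of_eq (hfix n x (h n))
    · have := hfix 0 x (by rw [hD0]; trivial)
      exact this ▸ le_iSup (fun n => u n x) 0
  · intro h
    by_contra hc
    push_neg at hc
    obtain ⟨n, hn⟩ := hc
    have := key x (by simpa [Set.mem_iInter] using ⟨n, hn⟩)
    rw [h] at this
    exact lt_irrefl _ this
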